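/- Let O be an operad with partial compositions and face maps F_i(p) = p ∘_i 1₀. For s ≥ 1 and p ∈ O(t₁ + ⋯ + t_s), define F_{j₁+⋯+j_s}^{t₁+⋯+t_s}(p) as the iterated insertion of 1₀ at positions j_s + Σ_{r<s} t_r, …, t₁ + j₂, j₁ (from innermost to outermost, in decreasing position order). Then for p ∈ O(s) and q_r ∈ O(t_r), F_{j₁+⋯+j_s}^{t₁+⋯+t_s}(γ(p; q₁, …, q_s)) = γ(p; F_{j₁}(q₁), …, F_{j_s}(q_s)), i.e., faces applied after operadic composition equal the composition of individually faced inputs (up to the stated Koszul sign (−1)^{ε_s} when working with graded signs, ε_s = Σ_r t_r(s−r)). -/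

import Mathlib

open scoped BigOperators TensorProduct

/-- A (connected, unitary, multiplicative) operad in `K`-vector spaces, presented via
partial compositions `∘ᵢ : O(p) ⊗ O(q) → O(p+q-1)`, with unit `1_O ∈ O(1)`,
distinguished element `1₀ ∈ O(0)` (connectedness: `O(0) ≅ K` with basis `1₀`),
and a multiplication `m ∈ O(2)` with `m ∘₁ m = m ∘₂ m`. -/
structure POperad (K : Type) [Field K] where
  O : ℕ → Type
  [acg : ∀ n, AddCommGroup (O n)]
  [mod : ∀ n, Module K (O n)]
  comp : ∀ {p q : ℕ}, O p → O q → ℕ → O (p + q - 1)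
  one0 : O 0
  one1 : O 1
  mul : O 2
  comp_add_left : ∀ {p q : ℕ} (x x' : O p) (y : O q) (i : ℕ),
    comp (x + x') y i = comp x y i + comp x' y i
  comp_add_right : ∀ {p q : ℕ} (x : O p) (y y' : O q) (i : ℕ),
    comp x (y + y') i = comp x y i + comp x y' i
  comp_smul_left : ∀ {p q : ℕ} (c : K) (x : O p) (y : O q) (i : ℕ),
    comp (c • x) y i = c • comp x y i
  comp_smul_right : ∀ {p q : ℕ} (c : K) (x : O p) (y : O q) (i : ℕ),
    comp x (c • y) i = c • comp x y i
  comp_one_right : ∀ {p : ℕ} (x : O p) (i : ℕ), 1 ≤ i → i ≤ p → HEq (comp x one1 i) x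
  comp_one_left : ∀ {q : ℕ} (y : O q), HEq (comp one1 y 1) y
  mul_mul : comp mul mul 1 = comp mul mul 2
  assoc_seq : ∀ {p q r : ℕ} (x : O p) (y : O q) (z : O r) (i j : ℕ),
    1 ≤ i → i ≤ p → 1 ≤ j → j ≤ q →
    HEq (comp (comp x y i) z (j + i - 1)) (comp x (comp y z j) i)
  assoc_par : ∀ {p q r : ℕ} (x : O p) (y : O q) (z : O r) (i j : ℕ),
    1 ≤ i → i < j → j ≤ p →
    HEq (comp (comp x y i) z (j + q - 1)) (comp (comp x z j) y i)

attribute [instance] POperad.acg POperad.mod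

/-- Cast along an equality of arities. -/
def POperad.pcast {K : Type} [Field K] (𝒪 : POperad K) {a b : ℕ} (h : a = b) (x : 𝒪.O a) :
    𝒪.O b := h ▸ x

/-- Partial composition on arity-tagged elements. -/
def POperad.compS {K : Type} [Field K] (𝒪 : POperad K)
    (x : (a : ℕ) × 𝒪.O a) (y : (b : ℕ) × 𝒪.O b) (i : ℕ) : (c : ℕ) × 𝒪.O c :=
  ⟨x.1 + y.1 - 1, 𝒪.comp x.2 y.2 i⟩

/-- The operadic composition `γ(x; y₁, …, y_s) = (⋯((x ∘_s y_s) ∘_{s-1} y_{s-1}) ⋯) ∘₁ y₁`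
built from partial compositions, on arity-tagged elements. -/
def POperad.gamS {K : Type} [Field K] (𝒪 : POperad K) :
    {s : ℕ} → (t : Fin s → ℕ) → ((c : ℕ) × 𝒪.O c) → (∀ r, 𝒪.O (t r)) →
      (c : ℕ) × 𝒪.O c
  | 0, _, x, _ => x
  | s + 1, t, x, q =>
      𝒪.gamS (fun r : Fin s => t r.castSucc)
        (𝒪.compS x ⟨t (Fin.last s), q (Fin.last s)⟩ (s + 1))
        (fun r => q r.castSucc)

/-- Iterated insertion of `1₀` at the prescribed positions (`pos 0` is applied
last, i.e. outermost). -/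
def POperad.multiFaceS {K : Type} [Field K] (𝒪 : POperad K) :
    (k : ℕ) → (pos : Fin k → ℕ) → ((c : ℕ) × 𝒪.O c) → (c : ℕ) × 𝒪.O c
  | 0, _, x => x
  | k + 1, pos, x =>
      𝒪.compS (𝒪.multiFaceS k (fun r => pos r.succ) x) ⟨0, 𝒪.one0⟩ (pos 0)



namespace POperad

variable {K : Type} [Field K] (𝒪 : POperad K)

lemma sigma_eq {a b : ℕ} (h : a = b) {x : 𝒪.O a} {y : 𝒪.O b} (h2 : HEq x y) :
    (⟨a, x⟩ : (c : ℕ) × 𝒪.O c) = ⟨b, y⟩ := by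
  subst h; exact congrArg _ (eq_of_heq h2)

lemma compS_assoc_seq {p q r : ℕ} (xx : 𝒪.O p) (yy : 𝒪.O q) (zz : 𝒪.O r) (i j : ℕ)
    (h1 : 1 ≤ i) (h2 : i ≤ p) (h3 : 1 ≤ j) (h4 : j ≤ q) :
    𝒪.compS (𝒪.compS ⟨p, xx⟩ ⟨q, yy⟩ i) ⟨r, zz⟩ (j + i - 1)
      = 𝒪.compS ⟨p, xx⟩ (𝒪.compS ⟨q, yy⟩ ⟨r, zz⟩ j) i :=
  𝒪.sigma_eq (by simp only [compS]; omega) (𝒪.assoc_seq xx yy zz i j h1 h2 h3 h4)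

lemma compS_assoc_par {p q r : ℕ} (xx : 𝒪.O p) (yy : 𝒪.O q) (zz : 𝒪.O r) (i j : ℕ)
    (h1 : 1 ≤ i) (h2 : i < j) (h3 : j ≤ p) :
    𝒪.compS (𝒪.compS ⟨p, xx⟩ ⟨q, yy⟩ i) ⟨r, zz⟩ (j + q - 1)
      = 𝒪.compS (𝒪.compS ⟨p, xx⟩ ⟨r, zz⟩ j) ⟨q, yy⟩ i :=
  𝒪.sigma_eq (by simp only [compS]; omega) (𝒪.assoc_par xx yy zz i j h1 h2 h3)

lemma multiFaceS_peel : ∀ (k : ℕ) (pos : Fin (k + 1) → ℕ) (x : (c : ℕ) × 𝒪.O c),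
    𝒪.multiFaceS (k + 1) pos x
      = 𝒪.multiFaceS k (fun r => pos r.castSucc)
          (𝒪.compS x ⟨0, 𝒪.one0⟩ (pos (Fin.last k)))
  | 0, pos, x => rfl
  | k + 1, pos, x => by
    show 𝒪.compS (𝒪.multiFaceS (k + 1) (fun r => pos r.succ) x) ⟨0, 𝒪.one0⟩ (pos 0)
      = 𝒪.compS (𝒪.multiFaceS k (fun r => pos r.succ.castSucc)
          (𝒪.compS x ⟨0, 𝒪.one0⟩ (pos (Fin.last (k + 1))))) ⟨0, 𝒪.one0⟩ (pos (Fin.castSucc 0))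
    rw [multiFaceS_peel k (fun r => pos r.succ) x, Fin.succ_last, Fin.castSucc_zero]
    have h1 : (fun r : Fin k => pos r.castSucc.succ) = fun r : Fin k => pos r.succ.castSucc := by
      funext r; rw [Fin.succ_castSucc]
    rw [h1]

lemma face_gamS : ∀ (s : ℕ) (t : Fin s → ℕ), (∀ r, 1 ≤ t r) → ∀ (x : (c : ℕ) × 𝒪.O c)
    (q : ∀ r, 𝒪.O (t r)) (i : ℕ), s < i → i ≤ x.1 →
    𝒪.compS (𝒪.gamS t x q) ⟨0, 𝒪.one0⟩ (i + ∑ r, (t r - 1))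
      = 𝒪.gamS t (𝒪.compS x ⟨0, 𝒪.one0⟩ i) q := by
  intro s
  induction s with
  | zero => intro t ht x q i h1 h2; simp [gamS]
  | succ s IH =>
    intro t ht x q i h1 h2
    obtain ⟨a, xx⟩ := x
    simp only [compS] at h2
    show 𝒪.compS (𝒪.gamS (fun r : Fin s => t r.castSucc)
        (𝒪.compS ⟨a, xx⟩ ⟨t (Fin.last s), q (Fin.last s)⟩ (s + 1)) (fun r => q r.castSucc))
        ⟨0, 𝒪.one0⟩ (i + ∑ r, (t r - 1)) = _
    have hsum : i + ∑ r, (t r - 1)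
        = (i + (t (Fin.last s) - 1)) + ∑ r : Fin s, (t r.castSucc - 1) := by
      rw [Fin.sum_univ_castSucc (f := fun r => t r - 1)]; omega
    rw [hsum, IH _ (fun r => ht r.castSucc) _ _ _ (by omega)
      (by have := ht (Fin.last s); simp only [compS]; omega)]
    have hpos : i + (t (Fin.last s) - 1) = i + t (Fin.last s) - 1 := by
      have := ht (Fin.last s); omega
    rw [hpos, 𝒪.compS_assoc_par xx (q (Fin.last s)) 𝒪.one0 (s + 1) i (by omega) h1 h2]
    rfl

theorem multiFace_gamma_gen : ∀ (s : ℕ) (t j : Fin s → ℕ),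
    (∀ r, 1 ≤ j r ∧ j r ≤ t r) → ∀ (x : (c : ℕ) × 𝒪.O c), s ≤ x.1 → ∀ (q : ∀ r, 𝒪.O (t r)),
    𝒪.multiFaceS s
        (fun r => j r + ∑ r' ∈ Finset.univ.filter (fun r' : Fin s => r' < r), t r')
        (𝒪.gamS t x q)
      = 𝒪.gamS (fun r => t r - 1) x (fun r => 𝒪.comp (q r) 𝒪.one0 (j r)) := by
  intro s
  induction s with
  | zero => intro t j hj x hx q; rfl
  | succ s IH =>
    intro t j hj x hx q
    obtain ⟨a, xx⟩ := x
    change s + 1 ≤ a at hx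
    rw [𝒪.multiFaceS_peel]
    have hflt : ∑ r' ∈ Finset.univ.filter (fun r' : Fin (s + 1) => r' < Fin.last s), t r'
        = ∑ r : Fin s, t r.castSucc := by
      rw [Finset.sum_filter, Fin.sum_univ_castSucc]
      simp [Fin.castSucc_lt_last]
    have hsum1 : ∑ r : Fin s, t r.castSucc = (∑ r : Fin s, (t r.castSucc - 1)) + s := by
      have : ∀ r : Fin s, t r.castSucc = (t r.castSucc - 1) + 1 := fun r => by
        have := (hj r.castSucc).1; have := (hj r.castSucc).2; omega
      rw [Finset.sum_congr rfl (fun r _ => this r), Finset.sum_add_distrib]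
      simp
    have hposlast : j (Fin.last s)
          + ∑ r' ∈ Finset.univ.filter (fun r' : Fin (s + 1) => r' < Fin.last s), t r'
        = (j (Fin.last s) + s) + ∑ r : Fin s, (t r.castSucc - 1) := by
      rw [hflt, hsum1]; omega
    have hlb : 1 ≤ t (Fin.last s) := le_trans (hj (Fin.last s)).1 (hj (Fin.last s)).2
    show 𝒪.multiFaceS s (fun r => j r.castSucc + ∑ r' ∈ Finset.univ.filter
          (fun r' : Fin (s + 1) => r' < r.castSucc), t r')
        (𝒪.compS (𝒪.gamS (fun r : Fin s => t r.castSucc)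
          (𝒪.compS ⟨a, xx⟩ ⟨t (Fin.last s), q (Fin.last s)⟩ (s + 1)) (fun r => q r.castSucc))
          ⟨0, 𝒪.one0⟩ (j (Fin.last s)
            + ∑ r' ∈ Finset.univ.filter (fun r' : Fin (s + 1) => r' < Fin.last s), t r')) = _
    rw [hposlast, 𝒪.face_gamS s _ (fun r => le_trans (hj r.castSucc).1 (hj r.castSucc).2) _ _ _
      (by have := (hj (Fin.last s)).1; omega)
      (by simp only [compS]; have := (hj (Fin.last s)).2; have := hlb; omega)]
    rw [show j (Fin.last s) + s = j (Fin.last s) + (s + 1) - 1 by omega,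
      𝒪.compS_assoc_seq xx (q (Fin.last s)) 𝒪.one0 (s + 1) (j (Fin.last s))
        (by omega) hx (hj (Fin.last s)).1 (hj (Fin.last s)).2]
    have hfcs : (fun r : Fin s => j r.castSucc + ∑ r' ∈ Finset.univ.filter
          (fun r' : Fin (s + 1) => r' < r.castSucc), t r')
        = fun r : Fin s => j r.castSucc + ∑ r' ∈ Finset.univ.filter
          (fun r' : Fin s => r' < r), t r'.castSucc := by
      funext r
      congr 1
      rw [Finset.sum_filter, Finset.sum_filter, Fin.sum_univ_castSucc]
      simp [Fin.castSucc_lt_castSucc_iff, (Fin.castSucc_lt_last r).asymm]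
    rw [hfcs, IH (fun r => t r.castSucc) (fun r => j r.castSucc) (fun r => hj r.castSucc)
      (𝒪.compS ⟨a, xx⟩ (𝒪.compS ⟨t (Fin.last s), q (Fin.last s)⟩ ⟨0, 𝒪.one0⟩ (j (Fin.last s))) (s + 1))
      (by simp only [compS]; have := hlb; omega) (fun r => q r.castSucc)]
    rfl

end POperad

/-- for `p ∈ O(s)` and `q_r ∈ O(t_r)`, the iterated face
`F_{j₁+⋯+j_s}^{t₁+⋯+t_s}` (inserting `1₀` at positions `j_r + Σ_{r'<r} t_{r'}`,
innermost first in decreasing position order) applied to `γ(p; q₁, …, q_s)`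
equals `γ(p; F_{j₁}(q₁), …, F_{j_s}(q_s))`: the two Koszul signs `(-1)^{ε_s}`
(with `ε_s = Σ_r t_r (s - r)`) cancel. -/
theorem multiFace_gamma {K : Type} [Field K] (𝒪 : POperad K)
    (s : ℕ) (t : Fin s → ℕ) (j : Fin s → ℕ)
    (hj : ∀ r, 1 ≤ j r ∧ j r ≤ t r)
    (p : 𝒪.O s) (q : ∀ r, 𝒪.O (t r)) :
    𝒪.multiFaceS s
        (fun r => j r + ∑ r' ∈ Finset.univ.filter (fun r' : Fin s => r' < r), t r')
        (𝒪.gamS t ⟨s, p⟩ q)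
      = 𝒪.gamS (fun r => t r - 1) ⟨s, p⟩
          (fun r => 𝒪.comp (q r) 𝒪.one0 (j r)) :=
  𝒪.multiFace_gamma_gen s t j hj ⟨s, p⟩ (le_refl s) q
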